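/- Let U and Q be real normed vector spaces. Let m, a, b : U × U → ℝ and m_T, a_T : Q × Q → ℝ and c : U × Q → ℝ be continuous bilinear forms, with m, a and m_T symmetric. Let T_f > 0, let F : [0, T_f] → U* and H : [0, T_f] → Q* be continuous families of continuous linear functionals, and suppose X ∈ C²([0, T_f]; U) and Θ ∈ C¹([0, T_f]; Q) satisfy, for every t ∈ [0, T_f] and every (v, S) ∈ U × Q: m(Ẍ(t), v) + b(Ẋ(t), v) + m_T(Θ̇(t), S) + c(Ẋ(t), S) + a(X(t), v) + a_T(Θ(t), S) − c(v, Θ(t)) = F(t)(v) + H(t)(S). Then for every t ∈ [0, T_f]: m(Ẋ(t), Ẋ(t)) + m_T(Θ(t), Θ(t)) + a(X(t), X(t)) + 2 ∫₀ᵗ [ b(Ẋ(s), Ẋ(s)) + a_T(Θ(s), Θ(s)) ] ds = m(Ẋ(0), Ẋ(0)) + m_T(Θ(0), Θ(0)) + a(X(0), X(0)) + 2 ∫₀ᵗ [ F(s)(Ẋ(s)) + H(s)(Θ(s)) ] ds. -/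

import Mathlib

open Set

/-- Integrated energy identity for the abstract semi-discrete
thermo-poroelastic system: under the variational equation tested with `(Ẋ, Θ)`, for every
`t ∈ [0, T_f]`,
`m(Ẋ(t),Ẋ(t)) + m_T(Θ(t),Θ(t)) + a(X(t),X(t)) + 2∫₀ᵗ [b(Ẋ,Ẋ) + a_T(Θ,Θ)]
  = m(Ẋ(0),Ẋ(0)) + m_T(Θ(0),Θ(0)) + a(X(0),X(0)) + 2∫₀ᵗ [F(Ẋ) + H(Θ)]`. -/
theorem stmt_6 {U Q : Type*} [NormedAddCommGroup U] [NormedSpace ℝ U]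
    [NormedAddCommGroup Q] [NormedSpace ℝ Q]
    (m a b : U →L[ℝ] U →L[ℝ] ℝ) (mT aT : Q →L[ℝ] Q →L[ℝ] ℝ) (c : U →L[ℝ] Q →L[ℝ] ℝ)
    (hm_symm : ∀ x y : U, m x y = m y x)
    (ha_symm : ∀ x y : U, a x y = a y x)
    (hmT_symm : ∀ x y : Q, mT x y = mT y x)
    (Tf : ℝ) (hTf : 0 < Tf)
    (F : ℝ → (U →L[ℝ] ℝ)) (H : ℝ → (Q →L[ℝ] ℝ))
    (hF : ContinuousOn F (Icc (0 : ℝ) Tf)) (hH : ContinuousOn H (Icc (0 : ℝ) Tf))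
    (X X' X'' : ℝ → U) (Θ Θ' : ℝ → Q)
    (hX : ∀ t ∈ Icc (0 : ℝ) Tf, HasDerivWithinAt X (X' t) (Icc (0 : ℝ) Tf) t)
    (hX' : ∀ t ∈ Icc (0 : ℝ) Tf, HasDerivWithinAt X' (X'' t) (Icc (0 : ℝ) Tf) t)
    (hX'' : ContinuousOn X'' (Icc (0 : ℝ) Tf))
    (hΘ : ∀ t ∈ Icc (0 : ℝ) Tf, HasDerivWithinAt Θ (Θ' t) (Icc (0 : ℝ) Tf) t)
    (hΘ' : ContinuousOn Θ' (Icc (0 : ℝ) Tf))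
    (heq : ∀ t ∈ Icc (0 : ℝ) Tf, ∀ (v : U) (S : Q),
      m (X'' t) v + b (X' t) v + mT (Θ' t) S + c (X' t) S
        + a (X t) v + aT (Θ t) S - c v (Θ t) = F t v + H t S) :
    ∀ t ∈ Icc (0 : ℝ) Tf,
      m (X' t) (X' t) + mT (Θ t) (Θ t) + a (X t) (X t)
          + 2 * ∫ s in (0 : ℝ)..t, (b (X' s) (X' s) + aT (Θ s) (Θ s))
        = m (X' 0) (X' 0) + mT (Θ 0) (Θ 0) + a (X 0) (X 0)
          + 2 * ∫ s in (0 : ℝ)..t, (F s (X' s) + H s (Θ s)) := by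
  intro t ht
  obtain ⟨ht0, htT⟩ := ht
  have hst : Icc (0:ℝ) t ⊆ Icc (0:ℝ) Tf := Icc_subset_Icc le_rfl htT
  -- continuity of the solution components
  have hXc : ContinuousOn X (Icc (0:ℝ) Tf) := fun s hs => (hX s hs).continuousWithinAt
  have hX'c : ContinuousOn X' (Icc (0:ℝ) Tf) := fun s hs => (hX' s hs).continuousWithinAt
  have hΘc : ContinuousOn Θ (Icc (0:ℝ) Tf) := fun s hs => (hΘ s hs).continuousWithinAt
  set E : ℝ → ℝ := fun s => m (X' s) (X' s) + mT (Θ s) (Θ s) + a (X s) (X s) with hE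
  set g : ℝ → ℝ := fun s =>
    2 * (F s (X' s) + H s (Θ s)) - 2 * (b (X' s) (X' s) + aT (Θ s) (Θ s)) with hg
  -- E has derivative g within Icc 0 Tf
  have hEderiv : ∀ s ∈ Icc (0:ℝ) Tf, HasDerivWithinAt E (g s) (Icc (0:ℝ) Tf) s := by
    intro s hs
    have h1 : HasDerivWithinAt (fun r => m (X' r)) (m (X'' s)) (Icc (0:ℝ) Tf) s :=
      m.hasFDerivAt.comp_hasDerivWithinAt s (hX' s hs)
    have h2 : HasDerivWithinAt (fun r => mT (Θ r)) (mT (Θ' s)) (Icc (0:ℝ) Tf) s :=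
      mT.hasFDerivAt.comp_hasDerivWithinAt s (hΘ s hs)
    have h3 : HasDerivWithinAt (fun r => a (X r)) (a (X' s)) (Icc (0:ℝ) Tf) s :=
      a.hasFDerivAt.comp_hasDerivWithinAt s (hX s hs)
    have hm1 := h1.clm_apply (hX' s hs)
    have hm2 := h2.clm_apply (hΘ s hs)
    have hm3 := h3.clm_apply (hX s hs)
    have := (hm1.add hm2).add hm3
    convert this using 1
    any_goals rfl
    have key := heq s hs (X' s) (Θ s)
    have e1 : m (X' s) (X'' s) = m (X'' s) (X' s) := hm_symm _ _
    have e2 : mT (Θ s) (Θ' s) = mT (Θ' s) (Θ s) := hmT_symm _ _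
    have e3 : a (X s) (X' s) = a (X' s) (X s) := ha_symm _ _
    simp only [hg]
    linarith [key, e1, e2, e3]
  -- FTC on [0, t]
  have hEcontT : ContinuousOn E (Icc (0:ℝ) Tf) := fun s hs => (hEderiv s hs).continuousWithinAt
  have hEcont : ContinuousOn E (Icc (0:ℝ) t) := hEcontT.mono hst
  have hbcont : ContinuousOn (fun s => b (X' s) (X' s) + aT (Θ s) (Θ s)) (Icc (0:ℝ) t) := by
    apply ContinuousOn.add
    · exact ((b.continuous.comp_continuousOn hX'c).clm_apply hX'c).mono hst
    · exact ((aT.continuous.comp_continuousOn hΘc).clm_apply hΘc).mono hst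
  have hfcont : ContinuousOn (fun s => F s (X' s) + H s (Θ s)) (Icc (0:ℝ) t) := by
    apply ContinuousOn.add
    · exact (hF.clm_apply hX'c).mono hst
    · exact (hH.clm_apply hΘc).mono hst
  have hbint : IntervalIntegrable (fun s => b (X' s) (X' s) + aT (Θ s) (Θ s))
      MeasureTheory.volume 0 t := by
    rw [intervalIntegrable_iff_integrableOn_Icc_of_le ht0]
    exact hbcont.integrableOn_compact isCompact_Icc
  have hfint : IntervalIntegrable (fun s => F s (X' s) + H s (Θ s))
      MeasureTheory.volume 0 t := by
    rw [intervalIntegrable_iff_integrableOn_Icc_of_le ht0]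
    exact hfcont.integrableOn_compact isCompact_Icc
  have hgint : IntervalIntegrable g MeasureTheory.volume 0 t := by
    simpa [hg] using (hfint.const_mul 2).sub (hbint.const_mul 2)
  have hderiv' : ∀ s ∈ Ioo (0:ℝ) t, HasDerivWithinAt E (g s) (Ioi s) s := by
    intro s hs
    have hs' : s ∈ Ioo (0:ℝ) Tf := ⟨hs.1, lt_of_lt_of_le hs.2 htT⟩
    have hmem : Icc (0:ℝ) Tf ∈ nhds s := Icc_mem_nhds hs'.1 hs'.2
    exact ((hEderiv s (Ioo_subset_Icc_self hs')).hasDerivAt hmem).hasDerivWithinAt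
  have hFTC : ∫ s in (0:ℝ)..t, g s = E t - E 0 :=
    intervalIntegral.integral_eq_sub_of_hasDeriv_right_of_le ht0 hEcont hderiv' hgint
  have hsplit : ∫ s in (0:ℝ)..t, g s
      = 2 * (∫ s in (0:ℝ)..t, (F s (X' s) + H s (Θ s)))
        - 2 * (∫ s in (0:ℝ)..t, (b (X' s) (X' s) + aT (Θ s) (Θ s))) := by
    rw [intervalIntegral.integral_sub (hfint.const_mul 2) (hbint.const_mul 2),
      intervalIntegral.integral_const_mul, intervalIntegral.integral_const_mul]
  rw [hsplit] at hFTC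
  simp only [hE] at hFTC
  linarith [hFTC]
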